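/- The magnitude of dual complex numbers is multiplicative: |pq| = |p|·|q| for all dual complex numbers p, q. -/

import Mathlib

open TrivSqZeroExt

/-- The magnitude of a dual complex number `q = q_st + q_I ε`, a dual number:
`|q| = √(q₁²+q₂²) + ((q₁q₃+q₂q₄)/√(q₁²+q₂²)) ε` if `q_st ≠ 0`, and
`|q| = √(q₃²+q₄²) ε` if `q_st = 0`. -/
noncomputable def dcAbs (q : DualNumber ℂ) : DualNumber ℝ :=
  if q.fst ≠ 0 then
    (‖q.fst‖,
      (q.fst.re * q.snd.re + q.fst.im * q.snd.im) / ‖q.fst‖)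
  else (0, ‖q.snd‖)

/-- The magnitude of dual complex numbers is multiplicative: `|pq| = |p|·|q|`. -/
theorem dcAbs_mul (p q : DualNumber ℂ) : dcAbs (p * q) = dcAbs p * dcAbs q := by
  by_cases hp : p.fst = 0
  · by_cases hq : q.fst = 0
    · simp only [dcAbs, fst_mul, snd_mul, hp, hq, mul_zero, ne_eq, not_true_eq_false, if_false]
      ext
      · rw [fst_mul]; simp [fst_mul, snd_mul, hp, hq]
      · rw [snd_mul]; simp [fst_mul, snd_mul, hp, hq]
    · simp only [dcAbs, fst_mul, snd_mul, hp, hq, zero_mul, ne_eq, not_true_eq_false, if_false,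
        not_false_eq_true, if_true]
      ext
      · rw [fst_mul]; simp [fst_mul, snd_mul, hp, hq, MulOpposite.smul_eq_mul_unop]
      · rw [snd_mul]; simp [fst_mul, snd_mul, hp, hq, MulOpposite.smul_eq_mul_unop]
  · by_cases hq : q.fst = 0
    · simp only [dcAbs, fst_mul, snd_mul, hp, hq, mul_zero, ne_eq, not_true_eq_false, if_false,
        not_false_eq_true, if_true]
      ext
      · rw [fst_mul]; simp [fst_mul, snd_mul, hp, hq]
      · rw [snd_mul]; simp [fst_mul, snd_mul, hp, hq]
    · have hpq : p.fst * q.fst ≠ 0 := mul_ne_zero hp hq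
      simp only [dcAbs, fst_mul, snd_mul, ne_eq, hpq, hp, hq, not_false_eq_true, if_true]
      have hap : ‖p.fst‖ ≠ 0 := by simpa using hp
      have haq : ‖q.fst‖ ≠ 0 := by simpa using hq
      ext
      · rw [fst_mul]
        simp [fst_mul, map_mul]
      · rw [snd_mul]
        simp only [snd_mul, fst_mk, snd_mk, smul_eq_mul, MulOpposite.smul_eq_mul_unop,
          MulOpposite.unop_op, map_mul, Complex.mul_re, Complex.mul_im, Complex.add_re,
          Complex.add_im, norm_mul, ↓reduceIte]
        have h1 : ‖p.fst‖^2 = p.fst.re^2 + p.fst.im^2 := by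
          rw [Complex.sq_norm]; simp [Complex.normSq]; ring
        have h2 : ‖q.fst‖^2 = q.fst.re^2 + q.fst.im^2 := by
          rw [Complex.sq_norm]; simp [Complex.normSq]; ring
        field_simp
        linear_combination -((fst p).re * (snd p).re + (fst p).im * (snd p).im) * h2 +
          (-((fst q).re * (snd q).re + (fst q).im * (snd q).im)) * h1
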